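/- For every S-CORE term P and states σ, τ under the R-semantics, ⟨P, σ⟩ ⇓ τ if and only if ⟨inv P, τ⟩ ⇓ σ. -/
import Mathlib


def push : ℤ × List ℤ × ℕ → ℤ × List ℤ × ℕ
  | (v, t, 0) => (0, v::t, 0)
  | (0, v::t, c+1) => (0, v::t, c+1)
  | (u, s, c+1) => (u, s, c)

def pop : ℤ × List ℤ × ℕ → ℤ × List ℤ × ℕ
  | (0, v::t, 0) => (v, t, 0)
  | (0, v::t, c+1) => (0, v::t, c+1)
  | (u, s, c) => (u, s, c+1)

inductive Term where
  | skip : Term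
  | inc : String → Term
  | dec : String → Term
  | push : String → Term
  | pop : String → Term
  | seq : Term → Term → Term
  | forLoop : String → Term → Term

def inv : Term → Term
  | .skip => .skip
  | .inc x => .dec x
  | .dec x => .inc x
  | .push x => .pop x
  | .pop x => .push x
  | .seq p q => .seq (inv q) (inv p)
  | .forLoop x p => .forLoop x (inv p)

def occurs (x : String) : Term → Prop
  | .skip => False
  | .inc y => x = y
  | .dec y => x = y
  | .push y => x = y
  | .pop y => x = y
  | .seq p q => occurs x p ∨ occurs x q
  | .forLoop y p => x = y ∨ occurs x p

/-- Well-formed terms: the leading variable of a `FOR` never occurs in its body. -/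
def WF : Term → Prop
  | .seq p q => WF p ∧ WF q
  | .forLoop x p => ¬ occurs x p ∧ WF p
  | _ => True

abbrev State := String → ℤ × List ℤ × ℕ

def upd (σ : State) (x : String) (p : ℤ × List ℤ × ℕ) : State :=
  fun y => if y = x then p else σ y

mutual
/-- The big-step R-semantics of S-CORE. -/
inductive Bigstep : Term → State → State → Prop where
  | skip (σ) : Bigstep .skip σ σ
  | inc (x σ) : Bigstep (.inc x) σ (upd σ x ((σ x).1 + 1, (σ x).2.1, (σ x).2.2))
  | dec (x σ) : Bigstep (.dec x) σ (upd σ x ((σ x).1 - 1, (σ x).2.1, (σ x).2.2))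
  | push (x σ) : Bigstep (.push x) σ (upd σ x (_root_.push (σ x)))
  | pop (x σ) : Bigstep (.pop x) σ (upd σ x (_root_.pop (σ x)))
  | seq {p q σ ν τ} : Bigstep p σ ν → Bigstep q ν τ → Bigstep (.seq p q) σ τ
  | forFwd {x p σ τ} : (σ x).1 ≥ 0 → Iter p (σ x).1.toNat σ τ →
      Bigstep (.forLoop x p) σ τ
  | forBwd {x p σ τ} : (σ x).1 < 0 → Iter (inv p) (-(σ x).1).toNat σ τ →
      Bigstep (.forLoop x p) σ τ

/-- `Iter p n σ τ`: `n`-fold iteration of `p` takes `σ` to `τ`. -/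
inductive Iter : Term → ℕ → State → State → Prop where
  | base (p σ) : Iter p 0 σ σ
  | step {p n σ ν τ} : Bigstep p σ ν → Iter p n ν τ → Iter p (n+1) σ τ
end


lemma Term_inv_inv (p : Term) : inv (inv p) = p := by
  induction p <;> simp [inv, *]

lemma pop_push (s : ℤ × List ℤ × ℕ) : pop (push s) = s := by
  obtain ⟨v, t, c⟩ := s
  rcases c with _ | c
  · simp [push, pop]
  · rcases eq_or_ne v 0 with rfl | hv
    · rcases t with _ | ⟨w, t⟩ <;> simp [push, pop]
    · rcases t with _ | ⟨w, t⟩ <;> simp [push, pop, hv]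

lemma push_pop (s : ℤ × List ℤ × ℕ) : push (pop s) = s := by
  obtain ⟨v, t, c⟩ := s
  rcases c with _ | c
  · rcases eq_or_ne v 0 with rfl | hv
    · rcases t with _ | ⟨w, t⟩ <;> simp [push, pop]
    · rcases t with _ | ⟨w, t⟩ <;> simp [push, pop, hv]
  · rcases eq_or_ne v 0 with rfl | hv
    · rcases t with _ | ⟨w, t⟩ <;> simp [push, pop]
    · rcases t with _ | ⟨w, t⟩ <;> simp [push, pop, hv]

lemma upd_upd_self (σ : State) (x : String) (a b : ℤ × List ℤ × ℕ) :
    upd (upd σ x a) x b = upd σ x b := by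
  funext y; by_cases h : y = x <;> simp [upd, h]

lemma upd_self (σ : State) (x : String) : upd σ x (σ x) = σ := by
  funext y; by_cases h : y = x <;> simp [upd, h]

lemma upd_at (σ : State) (x : String) (a : ℤ × List ℤ × ℕ) : upd σ x a x = a := by
  simp [upd]

lemma Iter_snoc {p : Term} {τ ρ : State} (hb : Bigstep p τ ρ) :
    ∀ n σ, Iter p n σ τ → Iter p (n+1) σ ρ := by
  intro n
  induction n with
  | zero => intro σ h; cases h; exact Iter.step hb (Iter.base _ _)
  | succ n ih => intro σ h; cases h with
    | step hb' hi => exact Iter.step hb' (ih _ hi)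

lemma Iter_rev {q q' : Term} (h : ∀ a b, Bigstep q a b → Bigstep q' b a) :
    ∀ n σ τ, Iter q n σ τ → Iter q' n τ σ := by
  intro n
  induction n with
  | zero => intro σ τ hi; cases hi; exact Iter.base _ _
  | succ n ih => intro σ τ hi; cases hi with
    | step hb hi' => exact Iter_snoc (h _ _ hb) _ _ (ih _ _ hi')

lemma Iter_unchanged {q : Term} {x : String} (h : ∀ a b, Bigstep q a b → b x = a x) :
    ∀ n σ τ, Iter q n σ τ → τ x = σ x := by
  intro n
  induction n with
  | zero => intro σ τ hi; cases hi; rfl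
  | succ n ih => intro σ τ hi; cases hi with
    | step hb hi' => rw [ih _ _ hi', h _ _ hb]

lemma unchanged (x : String) : ∀ p : Term, ¬ occurs x p →
    ∀ σ τ, (Bigstep p σ τ → τ x = σ x) ∧ (Bigstep (inv p) σ τ → τ x = σ x) := by
  intro p
  induction p with
  | skip => intro _ σ τ; constructor <;> (intro h; cases h; rfl)
  | inc y =>
    intro hx σ τ
    simp [occurs] at hx
    constructor <;> (intro h; cases h; simp [upd, hx])
  | dec y =>
    intro hx σ τ
    simp [occurs] at hx
    constructor <;> (intro h; cases h; simp [upd, hx])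
  | push y =>
    intro hx σ τ
    simp [occurs] at hx
    constructor <;> (intro h; cases h; simp [upd, hx])
  | pop y =>
    intro hx σ τ
    simp [occurs] at hx
    constructor <;> (intro h; cases h; simp [upd, hx])
  | seq p q ihp ihq =>
    intro hx σ τ
    have hxp : ¬ occurs x p := fun h => hx (Or.inl h)
    have hxq : ¬ occurs x q := fun h => hx (Or.inr h)
    constructor
    · intro h; cases h with
      | seq h1 h2 => rw [(ihq hxq _ _).1 h2, (ihp hxp _ _).1 h1]
    · intro h; cases h with
      | seq h1 h2 => rw [(ihp hxp _ _).2 h2, (ihq hxq _ _).2 h1]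
  | forLoop y q ih =>
    intro hx σ τ
    have hxq : ¬ occurs x q := fun h => hx (Or.inr h)
    constructor
    · intro h; cases h with
      | forFwd _ hi => exact Iter_unchanged (fun a b hb => (ih hxq a b).1 hb) _ _ _ hi
      | forBwd _ hi => exact Iter_unchanged (fun a b hb => (ih hxq a b).2 hb) _ _ _ hi
    · intro h; cases h with
      | forFwd _ hi => exact Iter_unchanged (fun a b hb => (ih hxq a b).2 hb) _ _ _ hi
      | forBwd _ hi =>
        rw [Term_inv_inv] at hi
        exact Iter_unchanged (fun a b hb => (ih hxq a b).1 hb) _ _ _ hi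

lemma main_rev : ∀ p : Term, WF p → ∀ σ τ,
    (Bigstep p σ τ → Bigstep (inv p) τ σ) ∧ (Bigstep (inv p) σ τ → Bigstep p τ σ) := by
  intro p
  induction p with
  | skip => intro _ σ τ; constructor <;> (intro h; cases h; exact Bigstep.skip _)
  | inc y =>
    intro _ σ τ
    constructor
    · intro h; cases h
      have h2 := Bigstep.dec y (upd σ y ((σ y).1 + 1, (σ y).2.1, (σ y).2.2))
      rwa [upd_at, upd_upd_self, show ((σ y).1 + 1 - 1 : ℤ) = (σ y).1 by ring,
        upd_self] at h2
    · intro h; cases h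
      have h2 := Bigstep.inc y (upd σ y ((σ y).1 - 1, (σ y).2.1, (σ y).2.2))
      rwa [upd_at, upd_upd_self, show ((σ y).1 - 1 + 1 : ℤ) = (σ y).1 by ring,
        upd_self] at h2
  | dec y =>
    intro _ σ τ
    constructor
    · intro h; cases h
      have h2 := Bigstep.inc y (upd σ y ((σ y).1 - 1, (σ y).2.1, (σ y).2.2))
      rwa [upd_at, upd_upd_self, show ((σ y).1 - 1 + 1 : ℤ) = (σ y).1 by ring,
        upd_self] at h2
    · intro h; cases h
      have h2 := Bigstep.dec y (upd σ y ((σ y).1 + 1, (σ y).2.1, (σ y).2.2))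
      rwa [upd_at, upd_upd_self, show ((σ y).1 + 1 - 1 : ℤ) = (σ y).1 by ring,
        upd_self] at h2
  | push y =>
    intro _ σ τ
    constructor
    · intro h; cases h
      have h2 := Bigstep.pop y (upd σ y (push (σ y)))
      rwa [upd_at, upd_upd_self, pop_push, upd_self] at h2
    · intro h; cases h
      have h2 := Bigstep.push y (upd σ y (pop (σ y)))
      rwa [upd_at, upd_upd_self, push_pop, upd_self] at h2
  | pop y =>
    intro _ σ τ
    constructor
    · intro h; cases h
      have h2 := Bigstep.push y (upd σ y (pop (σ y)))
      rwa [upd_at, upd_upd_self, push_pop, upd_self] at h2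
    · intro h; cases h
      have h2 := Bigstep.pop y (upd σ y (push (σ y)))
      rwa [upd_at, upd_upd_self, pop_push, upd_self] at h2
  | seq p q ihp ihq =>
    intro hw σ τ
    obtain ⟨hwp, hwq⟩ := hw
    constructor
    · intro h; cases h with
      | seq h1 h2 => exact Bigstep.seq ((ihq hwq _ _).1 h2) ((ihp hwp _ _).1 h1)
    · intro h; cases h with
      | seq h1 h2 => exact Bigstep.seq ((ihp hwp _ _).2 h2) ((ihq hwq _ _).2 h1)
  | forLoop y q ih =>
    intro hw σ τ
    obtain ⟨hxy, hwq⟩ := hw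
    have hun := unchanged y q hxy
    constructor
    · intro h; cases h with
      | forFwd hge hi =>
        have hτ : τ y = σ y := Iter_unchanged (fun a b hb => (hun a b).1 hb) _ _ _ hi
        refine Bigstep.forFwd (by rw [hτ]; exact hge) ?_
        rw [hτ]
        exact Iter_rev (fun a b hb => (ih hwq a b).1 hb) _ _ _ hi
      | forBwd hlt hi =>
        have hτ : τ y = σ y := Iter_unchanged (fun a b hb => (hun a b).2 hb) _ _ _ hi
        refine Bigstep.forBwd (x := y) (by rw [hτ]; exact hlt) ?_
        rw [hτ, Term_inv_inv]
        exact Iter_rev (fun a b hb => (ih hwq a b).2 hb) _ _ _ hi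
    · intro h; cases h with
      | forFwd hge hi =>
        have hτ : τ y = σ y := Iter_unchanged (fun a b hb => (hun a b).2 hb) _ _ _ hi
        refine Bigstep.forFwd (by rw [hτ]; exact hge) ?_
        rw [hτ]
        exact Iter_rev (fun a b hb => (ih hwq a b).2 hb) _ _ _ hi
      | forBwd hlt hi =>
        rw [Term_inv_inv] at hi
        have hτ : τ y = σ y := Iter_unchanged (fun a b hb => (hun a b).1 hb) _ _ _ hi
        refine Bigstep.forBwd (x := y) (by rw [hτ]; exact hlt) ?_
        rw [hτ]
        exact Iter_rev (fun a b hb => (ih hwq a b).1 hb) _ _ _ hi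

theorem rsem_weakly_reversible (P : Term) (hP : WF P) (σ τ : State) :
    Bigstep P σ τ ↔ Bigstep (inv P) τ σ :=
  ⟨fun h => (main_rev P hP σ τ).1 h, fun h => (main_rev P hP τ σ).2 h⟩
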